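/- arXiv:2002.10304 — 4 statements merged into one kernel-verified Lean document; each statement's English description precedes it below -/
import Mathlib

section
/- Let F be a formal power series over a field K with invertible constant term, and let G be its inverse truncated at precision k (i.e., F·G ≡ 1 mod X^k). Then for any 0 < ℓ ≤ k, the coefficients of degree k through k+ℓ-1 of the inverse of F are given by the negation of the truncation mod X^ℓ of the product of G (truncated mod X^ℓ) with the 'middle product' MP(F_{[1..k+ℓ[}, G_{[0..k[}) := ((F_{[1..k+ℓ[} · G_{[0..k[}) div X^{k-1}) mod X^ℓ. That is, if H = G − X^k·(((F_{[1..k+ℓ[}·G) div X^{k-1}) · G mod X^ℓ) then F·H ≡ 1 mod X^{k+ℓ}. -/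
open Polynomial

/-- `chunk F a b` is the polynomial `F_{[a..b[}` = Σ_{i=a}^{b-1} f_i X^{i-a}. -/
noncomputable def chunk {K : Type*} [Field K] (F : Polynomial K) (a b : ℕ) : Polynomial K :=
  ∑ i ∈ Finset.range (b - a), Polynomial.C (F.coeff (a + i)) * Polynomial.X ^ i

lemma chunk_coeff {K : Type*} [Field K] (F : Polynomial K) (a b i : ℕ) :
    (chunk F a b).coeff i = if i < b - a then F.coeff (a + i) else 0 := by
  unfold chunk
  rw [Polynomial.finset_sum_coeff]
  simp only [Polynomial.coeff_C_mul, Polynomial.coeff_X_pow, mul_ite, mul_one, mul_zero]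
  by_cases h : i < b - a
  · rw [Finset.sum_eq_single i]
    · simp [h]
    · intro j _ hj; simp [Ne.symm hj]
    · intro hnot; simp at hnot; omega
  · rw [if_neg h]
    apply Finset.sum_eq_zero
    intro j hj
    rw [Finset.mem_range] at hj
    have : i ≠ j := by omega
    simp [this]

lemma coeff_mul_congr_left {K : Type*} [Field K] {A A' B : Polynomial K} {d : ℕ}
    (h : ∀ n ≤ d, A.coeff n = A'.coeff n) : (A * B).coeff d = (A' * B).coeff d := by
  rw [Polynomial.coeff_mul, Polynomial.coeff_mul]
  apply Finset.sum_congr rfl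
  intro p hp
  rw [Finset.HasAntidiagonal.mem_antidiagonal] at hp
  rw [h p.1 (by omega)]

lemma coeff_mul_congr_right {K : Type*} [Field K] {A B B' : Polynomial K} {d : ℕ}
    (h : ∀ n ≤ d, B.coeff n = B'.coeff n) : (A * B).coeff d = (A * B').coeff d := by
  rw [mul_comm A B, mul_comm A B']
  exact coeff_mul_congr_left h

/-- Generalized Newton iteration for power series inversion (Lemma 2.2):
if `G` is the inverse of `F` at precision `k`, then
`H = G − X^k·(MP(F_{[1..k+ℓ[}, G)·G mod X^ℓ)` is the inverse of `F` at precision `k+ℓ`,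
where `MP(A,B) = ((A·B) div X^{k-1}) mod X^ℓ`. -/
theorem inplace_inversion_step {K : Type*} [Field K] (k ℓ : ℕ) (hℓ : 0 < ℓ) (hlk : ℓ ≤ k)
    (F G : Polynomial K)
    (hGdeg : ∀ i, k ≤ i → G.coeff i = 0)
    (hFG : ∀ i < k, (F * G).coeff i = if i = 0 then 1 else 0) :
    ∀ i < k + ℓ,
      (F * (G - Polynomial.X ^ k *
        chunk (chunk (chunk F 1 (k + ℓ) * G) (k - 1) ((k - 1) + ℓ) * G) 0 ℓ)).coeff i
      = if i = 0 then 1 else 0 := by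
  intro i hi
  set F' := chunk F 1 (k + ℓ) with hF'
  set M := chunk (F' * G) (k - 1) ((k - 1) + ℓ) with hM
  set T := chunk (M * G) 0 ℓ with hT
  have hk1 : 1 ≤ k := le_trans hℓ hlk
  have hmul : F * (G - Polynomial.X ^ k * T)
      = F * G - (F * T) * Polynomial.X ^ k := by ring
  rw [hmul, Polynomial.coeff_sub, Polynomial.coeff_mul_X_pow']
  by_cases hik : i < k
  · rw [hFG i hik, if_neg (show ¬ k ≤ i by omega)]
    simp
  · push_neg at hik
    have hi0 : i ≠ 0 := by omega
    rw [if_neg hi0, if_pos hik]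
    have hj : i - k < ℓ := by omega
    -- (F*T).coeff (i-k) = (F*(M*G)).coeff (i-k)
    have s1 : (F * T).coeff (i - k) = (F * (M * G)).coeff (i - k) := by
      apply coeff_mul_congr_right
      intro n hn
      rw [hT, chunk_coeff, if_pos (by omega), Nat.zero_add]
    -- = (M*(F*G)).coeff (i-k)
    have s2 : (F * (M * G)).coeff (i - k) = (M * (F * G)).coeff (i - k) := by
      ring_nf
    -- = M.coeff (i-k)
    have s3 : (M * (F * G)).coeff (i - k) = M.coeff (i - k) := by
      have := coeff_mul_congr_right (A := M) (B := F * G) (B' := 1) (d := i - k)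
        (by intro n hn
            rw [hFG n (by omega), Polynomial.coeff_one])
      rw [this, mul_one]
    -- = (F'*G).coeff (k-1 + (i-k))
    have s4 : M.coeff (i - k) = (F' * G).coeff ((k - 1) + (i - k)) := by
      rw [hM, chunk_coeff, if_pos (by omega)]
    -- = (F.divX * G).coeff (k-1 + (i-k))
    have s5 : (F' * G).coeff ((k - 1) + (i - k)) = (F.divX * G).coeff ((k - 1) + (i - k)) := by
      apply coeff_mul_congr_left
      intro n hn
      rw [hF', chunk_coeff, if_pos (by omega), Polynomial.coeff_divX, Nat.add_comm]
    -- (F*G).coeff i = (F.divX * G).coeff (k-1 + (i-k))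
    have s6 : (F.divX * G).coeff ((k - 1) + (i - k)) = (F * G).coeff i := by
      have hieq : ((k - 1) + (i - k)) + 1 = i := by omega
      conv_rhs => rw [← Polynomial.X_mul_divX_add F, ← hieq]
      rw [add_mul, Polynomial.coeff_add, mul_assoc, Polynomial.coeff_X_mul,
        Polynomial.coeff_C_mul, hGdeg _ (by omega), mul_zero, add_zero]
    rw [s1, s2, s3, s4, s5, s6]
    ring
end

section
/- Let F and G be formal power series over a field K with G invertible (constant term nonzero), and suppose Q_k is the quotient F/G truncated at precision k (i.e., F ≡ G·Q_k mod X^k, deg Q_k < k). Then for 0 < ℓ ≤ k, the next ℓ coefficients of F/G are given by Q_ℓ = G^{-1} · ((F − G·Q_k) div X^k) mod X^ℓ; equivalently, F/G ≡ Q_k + X^k·Q_ℓ mod X^{k+ℓ}. -/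
open PowerSeries

/-- Generalized Karp–Markstein step for power series division (Lemma 2.4):
if `Qk` is the quotient `F/G` at precision `k`, then with
`Qℓ = (G⁻¹ · ((F − G·Qk) div X^k)) mod X^ℓ` one has
`F/G ≡ Qk + X^k·Qℓ (mod X^{k+ℓ})`. -/
theorem inplace_division_step {K : Type*} [Field K] (k ℓ : ℕ) (hℓ : 0 < ℓ) (hlk : ℓ ≤ k)
    (F G Qk : PowerSeries K)
    (hG : PowerSeries.constantCoeff G ≠ 0)
    (hQkdeg : ∀ i, k ≤ i → PowerSeries.coeff i Qk = 0)
    (hQk : ∀ i < k, PowerSeries.coeff i F = PowerSeries.coeff i (G * Qk)) :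
    ∀ i < k + ℓ,
      PowerSeries.coeff i (F * G⁻¹) =
        PowerSeries.coeff i
          (Qk + PowerSeries.X ^ k *
            PowerSeries.mk (fun j =>
              if j < ℓ then
                PowerSeries.coeff j
                  (G⁻¹ * PowerSeries.mk (fun t => PowerSeries.coeff (t + k) (F - G * Qk)))
              else 0)) := by
  set S : PowerSeries K :=
    PowerSeries.mk (fun t => PowerSeries.coeff (t + k) (F - G * Qk)) with hSdef
  have hF : F = G * Qk + PowerSeries.X ^ k * S := by
    ext n
    rw [map_add, PowerSeries.coeff_X_pow_mul']
    by_cases hn : n < k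
    · rw [hQk n hn, if_neg (by omega)]
      ring
    · push_neg at hn
      rw [if_pos hn, hSdef, PowerSeries.coeff_mk]
      have : n - k + k = n := Nat.sub_add_cancel hn
      rw [this, map_sub]
      ring
  have hGinv : G * G⁻¹ = 1 := PowerSeries.mul_inv_cancel G hG
  have key : F * G⁻¹ = Qk + PowerSeries.X ^ k * (G⁻¹ * S) := by
    rw [hF]
    calc (G * Qk + PowerSeries.X ^ k * S) * G⁻¹
        = Qk * (G * G⁻¹) + PowerSeries.X ^ k * (G⁻¹ * S) := by ring
      _ = Qk + PowerSeries.X ^ k * (G⁻¹ * S) := by rw [hGinv, mul_one]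
  intro i hi
  rw [key, map_add, map_add]
  congr 1
  rw [PowerSeries.coeff_X_pow_mul', PowerSeries.coeff_X_pow_mul']
  split_ifs with h
  · rw [PowerSeries.coeff_mk, if_pos (by omega)]
  · rfl
end

section
/- Let A be a polynomial of degree at most m+n-2 and B a monic polynomial of degree n-1 over a field K. Then the quotient Q = A div B satisfies rev(Q) ≡ rev(A)/rev(B) mod X^m, where rev denotes coefficient reversal at the respective degrees (rev(A) = X^{m+n-2}A(1/X), rev(B) = X^{n-1}B(1/X), rev(Q) = X^{m-1}Q(1/X)), and rev(B) has invertible constant term so the power series quotient is well defined. -/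
open Polynomial

/-- Fast Euclidean division via reversal: for `A` of degree ≤ m+n-2 and `B` monic of
degree `n-1`, the quotient `Q = A div B` satisfies
`rev(A) ≡ rev(B)·rev(Q) (mod X^m)`, i.e. `rev(Q) ≡ rev(A)/rev(B) (mod X^m)`,
where `rev` is coefficient reversal at degrees `m+n-2`, `n-1`, `m-1` respectively;
moreover `rev(B)` has constant coefficient `1`, so the power series quotient is
well defined. -/
theorem euclidean_division_by_reversal {K : Type*} [Field K] (m n : ℕ)
    (hm : 1 ≤ m) (hn : 1 ≤ n) (A B : Polynomial K)
    (hB : B.Monic) (hBdeg : B.natDegree = n - 1) (hA : A.natDegree ≤ m + n - 2) :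
    (Polynomial.reflect (n - 1) B).coeff 0 = 1 ∧
    ∀ i < m,
      (Polynomial.reflect (m + n - 2) A).coeff i =
        (Polynomial.reflect (n - 1) B * Polynomial.reflect (m - 1) (A /ₘ B)).coeff i := by
  constructor
  · rw [coeff_reflect, revAt_le (Nat.zero_le _), Nat.sub_zero, ← hBdeg]
    exact hB
  · intro i hi
    have hQ : (A /ₘ B).natDegree ≤ m - 1 := by
      rw [natDegree_divByMonic A hB, hBdeg]
      omega
    have hsum : (n - 1) + (m - 1) = m + n - 2 := by omega
    rw [← hsum, ← reflect_mul B (A /ₘ B) hBdeg.le hQ, hsum]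
    rw [coeff_reflect, coeff_reflect]
    have hi' : i ≤ m + n - 2 := by omega
    rw [revAt_le hi']
    have key : A = B * (A /ₘ B) + A %ₘ B := (modByMonic_add_div A B).symm.trans (by ring)
    have hR : (A %ₘ B).natDegree < n - 1 ∨ A %ₘ B = 0 := by
      rcases eq_or_ne B 1 with h1 | h1
      · exact Or.inr (by simp [h1])
      · left
        rw [← hBdeg]
        exact natDegree_modByMonic_lt A hB h1
    have hRcoeff : (A %ₘ B).coeff (m + n - 2 - i) = 0 := by
      rcases hR with h | h
      · exact coeff_eq_zero_of_natDegree_lt (by omega)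
      · simp [h]
    conv_lhs => rw [key]
    rw [coeff_add, hRcoeff, add_zero]
end

section
/- Termination and step-count bound for the in-place inversion loop: fix an integer c ≥ 2 and n ≥ 1. Define sequences by k_0 = 1, ℓ_0 = 1, k_{i+1} = k_i + ℓ_i, ℓ_{i+1} = min(k_{i+1}, ⌊(n - k_{i+1})/c⌋). Then the sequence k_i is strictly increasing while ℓ_i > 0, the loop terminates (ℓ_i reaches 0) with k_i ≥ n - c at termination, and during the 'deceleration phase' (when ℓ_i = ⌊(n-k_i)/c⌋ < k_i), the quantity t_i = n - k_i satisfies t_{i+1} ≤ t_i·(c-1)/c + 1, so the deceleration phase lasts O(log n) iterations (at most log_{c/(c-1)}(n) + O(1) steps). -/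
/-- Termination and step-count bound for the in-place inversion loop: with
`k₀ = ℓ₀ = 1`, `k_{i+1} = k_i + ℓ_i`, `ℓ_{i+1} = min(k_{i+1}, ⌊(n-k_{i+1})/c⌋)`,
the sequence `k` strictly increases while `ℓ > 0`; during the deceleration phase
(`ℓ_i = ⌊(n-k_i)/c⌋`) the quantity `t_i = n - k_i` satisfies
`t_{i+1} ≤ t_i·(c-1)/c + 1` (cleared of denominators); and the loop terminates
(`ℓ` reaches `0` with `k ≥ n - c`) after `O(log n)` iterations. -/
theorem inplace_inversion_loop_bound (c n : ℕ) (hc : 2 ≤ c) (hn : 1 ≤ n)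
    (k ℓ : ℕ → ℕ)
    (hk0 : k 0 = 1) (hl0 : ℓ 0 = 1)
    (hk : ∀ i, k (i + 1) = k i + ℓ i)
    (hl : ∀ i, ℓ (i + 1) = min (k (i + 1)) ((n - k (i + 1)) / c)) :
    (∀ i, 0 < ℓ i → k i < k (i + 1)) ∧
    (∀ i, ℓ i = (n - k i) / c → (n - k (i + 1)) * c ≤ (n - k i) * (c - 1) + c) ∧
    (∃ i ≤ 4 * c * (Nat.log 2 n + 2), ℓ i = 0 ∧ n - c ≤ k i) := by
  have hc0 : 0 < c := by omega
  refine ⟨fun i h => by rw [hk]; omega, ?_, ?_⟩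
  · intro i hli
    have hki := hk i
    rw [hli] at hki
    have hd : (n - k i) / c ≤ (n - k i) := Nat.div_le_self _ _
    have hdm := Nat.div_add_mod (n - k i) c
    have hml := Nat.mod_lt (n - k i) hc0
    set t := n - k i with ht
    set d := t / c with hdd
    set r := t % c with hrr
    have h1 : n - k (i + 1) = t - d := by omega
    rw [h1]
    have h1c : 1 ≤ c := by omega
    zify [hd, h1c]
    have h2 : (c : ℤ) * d + r = t := by exact_mod_cast hdm
    have h3 : (r : ℤ) < c := by exact_mod_cast hml
    linarith [h2, h3]
  · set L := Nat.log 2 n with hL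
    have hkmono : Monotone k := monotone_nat_of_le_succ fun i => by rw [hk]; omega
    have hnlt : n < 2 ^ (L + 1) := by
      rw [hL]; exact Nat.lt_pow_succ_log_self (by norm_num) n
    have hD : ∃ a, 1 ≤ a ∧ a ≤ L + 1 ∧ (n - k a) / c ≤ k a := by
      by_contra hcon
      push_neg at hcon
      have hdouble : ∀ i, i ≤ L → k (i + 1) = 2 ^ (i + 1) := by
        intro i
        induction i with
        | zero =>
          intro _
          rw [hk 0, hk0, hl0]
          norm_num
        | succ j ih =>
          intro hj
          have h1 : k (j + 1) = 2 ^ (j + 1) := ih (by omega)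
          have h2 : k (j + 1) < (n - k (j + 1)) / c := hcon (j + 1) (by omega) (by omega)
          have h3 : ℓ (j + 1) = k (j + 1) := by
            rw [hl j]; exact min_eq_left (le_of_lt h2)
          rw [hk (j + 1), h3, h1, pow_succ]
          ring
      have h1 : k (L + 1) = 2 ^ (L + 1) := hdouble L le_rfl
      have h2 : k (L + 1) < (n - k (L + 1)) / c := hcon (L + 1) (by omega) le_rfl
      have h3 : (n - k (L + 1)) / c ≤ n - k (L + 1) := Nat.div_le_self _ _
      have h5 : k (L + 1) < n - k (L + 1) := lt_of_lt_of_le h2 h3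
      rw [h1] at h5
      generalize hX : (2 : ℕ) ^ (L + 1) = X at hnlt h5
      omega
    obtain ⟨a, ha1, haL, haD⟩ := hD
    have habs : ∀ i, a ≤ i → (n - k i) / c ≤ k i := by
      intro i hi
      induction i, hi using Nat.le_induction with
      | base => exact haD
      | succ j hj ih =>
        have h1 : k j ≤ k (j + 1) := hkmono (by omega)
        calc (n - k (j + 1)) / c ≤ (n - k j) / c := Nat.div_le_div_right (by omega)
          _ ≤ k j := ih
          _ ≤ k (j + 1) := h1
    have hlval : ∀ i, a ≤ i → ℓ i = (n - k i) / c := by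
      intro i hi
      obtain ⟨j, rfl⟩ : ∃ j, i = j + 1 := ⟨i - 1, by omega⟩
      rw [hl j]
      exact min_eq_right (habs _ hi)
    have hmrec : ∀ i, a ≤ i → n - k (i + 1) = (n - k i) - (n - k i) / c := by
      intro i hi
      have h1 := hk i
      rw [hlval i hi] at h1
      generalize (n - k i) / c = q at h1 ⊢
      omega
    have hmanti : ∀ i j, i ≤ j → n - k j ≤ n - k i := fun i j h => by
      have := hkmono h; omega
    have hsum : ∀ j, a ≤ j → ∀ s, n - k (j + s) + s * ((n - k (j + s)) / c) ≤ n - k j := by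
      intro j hj s
      induction s with
      | zero => simp
      | succ s ih =>
        have h1 : n - k (j + s + 1) = (n - k (j + s)) - (n - k (j + s)) / c :=
          hmrec (j + s) (by omega)
        have h2 : (n - k (j + s + 1)) / c ≤ (n - k (j + s)) / c :=
          Nat.div_le_div_right (hmanti _ _ (by omega))
        have h3 : (n - k (j + s)) / c ≤ n - k (j + s) := Nat.div_le_self _ _
        have h4 : j + (s + 1) = j + s + 1 := by ring
        rw [h4]
        calc n - k (j + s + 1) + (s + 1) * ((n - k (j + s + 1)) / c)
            ≤ ((n - k (j + s)) - (n - k (j + s)) / c) + (s + 1) * ((n - k (j + s)) / c) :=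
              Nat.add_le_add (le_of_eq h1) (Nat.mul_le_mul le_rfl h2)
          _ = (((n - k (j + s)) - (n - k (j + s)) / c) + (n - k (j + s)) / c)
                + s * ((n - k (j + s)) / c) := by ring
          _ = (n - k (j + s)) + s * ((n - k (j + s)) / c) := by
              rw [Nat.sub_add_cancel h3]
          _ ≤ n - k j := ih
    have hwin : ∀ j, a ≤ j → 2 * (n - k (j + 2 * c)) ≤ (n - k j) + 2 * c := by
      intro j hj
      have h1 := hsum j hj (2 * c)
      have h2 := Nat.div_add_mod (n - k (j + 2 * c)) c
      have h3 := Nat.mod_lt (n - k (j + 2 * c)) hc0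
      rw [mul_assoc] at h1
      generalize c * ((n - k (j + 2 * c)) / c) = v at h1 h2
      generalize (n - k (j + 2 * c)) % c = r at h2 h3
      omega
    have hhalf : ∀ w, n - k (a + 2 * c * w) ≤ n / 2 ^ w + 2 * c := by
      intro w
      induction w with
      | zero =>
        have h0 : 2 * c * 0 = 0 := by ring
        rw [h0, pow_zero, Nat.div_one]
        omega
      | succ w ih =>
        have h1 := hwin (a + 2 * c * w) (by omega)
        have h2 : a + 2 * c * (w + 1) = a + 2 * c * w + 2 * c := by ring
        rw [h2]
        have h3 : n / 2 ^ (w + 1) = n / 2 ^ w / 2 := by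
          rw [Nat.div_div_eq_div_mul, ← pow_succ]
        rw [h3]
        generalize n / 2 ^ w = X at ih ⊢
        omega
    have hsmall : n - k (a + 2 * c * (L + 1)) ≤ 2 * c := by
      have h1 := hhalf (L + 1)
      have h2 : n / 2 ^ (L + 1) = 0 := Nat.div_eq_of_lt hnlt
      rw [h2] at h1
      omega
    have htail : ∀ s j, a ≤ j → n - k j ≤ c + s → n - k (j + (s + 1)) < c := by
      intro s
      induction s with
      | zero =>
        intro j hj hm
        have h1 := hmrec j hj
        show n - k (j + 1) < c
        rcases Nat.lt_or_ge (n - k j) c with h | h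
        · rw [h1, Nat.div_eq_of_lt h]; omega
        · have hme : n - k j = c := by omega
          rw [h1, hme, Nat.div_self hc0]; omega
      | succ s ih =>
        intro j hj hm
        have h1 := hmrec j hj
        have h6 : j + (s + 1 + 1) = (j + 1) + (s + 1) := by ring
        rw [h6]
        apply ih (j + 1) (by omega)
        rcases Nat.lt_or_ge (n - k j) c with h | h
        · rw [h1, Nat.div_eq_of_lt h]; omega
        · have h2 : 1 ≤ (n - k j) / c := (Nat.one_le_div_iff hc0).mpr h
          rw [h1]
          generalize (n - k j) / c = q at h2 ⊢
          omega
    have hfin : n - k (a + 2 * c * (L + 1) + (c + 1)) < c :=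
      htail c (a + 2 * c * (L + 1)) (by omega) (by omega)
    refine ⟨a + 2 * c * (L + 1) + (c + 1), ?_, ?_, by omega⟩
    · have h7 : L ≤ 2 * c * L := Nat.le_mul_of_pos_left L (by omega)
      have h8 : 4 * c * (L + 2) = 2 * (2 * c * L) + 8 * c := by ring
      have h9 : 2 * c * (L + 1) = 2 * c * L + 2 * c := by ring
      rw [h8, h9]
      generalize 2 * c * L = P at h7 ⊢
      omega
    · have h10 : ℓ (a + 2 * c * (L + 1) + (c + 1)) = (n - k (a + 2 * c * (L + 1) + (c + 1))) / c :=
        hlval _ (by omega)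
      rw [h10, Nat.div_eq_of_lt hfin]
end
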